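/- Let σ₀, σ₁ ∈ ℝ with σ₁ ≠ 0 and ε ∈ {-1,0,1}. Consider the Riemannian metric on the surface S given in coordinates (θ, φ), θ ∈ (0,π), φ ∈ (0,2π), by ds² = (Σ²/(1 − σ₀² sin²θ)) dθ² + Σ² sin²θ dφ², where Σ = Σ(θ) := 2σ₁ P(θ)/(P(θ)² + ε σ₁²) with P(θ) = σ₀ cos θ + √(1 − σ₀² sin²θ), assumed positive with 1 − σ₀² sin²θ > 0 on the domain. Then the scalar curvature of this metric is constant, equal to R = [(1+σ₀)² + ε σ₁²][(1−σ₀)² + ε σ₁²]/(2σ₁²). -/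

import Mathlib

open Real Set

private lemma key_poly (σ₀ A c s Q : ℝ) (hs : s ^ 2 = 1 - c ^ 2)
    (hQ : Q ^ 2 = 1 - σ₀ ^ 2 * s ^ 2) :
    -2*σ₀^2*s*c^2*((σ₀*c+Q)^2+A)^2 - 2*Q^2*s*((σ₀*c+Q)^2+A)^2
      + 4*σ₀*s*c*((σ₀*c+Q)^2-A)*Q*((σ₀*c+Q)^2+A) - 8*σ₀^2*A*s^3*(σ₀*c+Q)^2
    = -2*((1+σ₀)^2+A)*((1-σ₀)^2+A)*(σ₀*c+Q)^2*s := by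
  linear_combination
    (4*σ₀^2*s - 4*σ₀^2*A*s - 2*σ₀^4*s - 6*σ₀^4*s^3 + 4*σ₀^4*A*s^3 + 2*σ₀^6*s^3
      + 2*σ₀^6*s^5 + 8*c*σ₀^3*s*Q - 8*c*σ₀^3*A*s*Q - 4*c*σ₀^5*s*Q - 4*c*σ₀^5*s^3*Q
      + 2*c^2*σ₀^4*s - 4*c^2*σ₀^4*A*s - 2*c^2*σ₀^6*s - 4*c^3*σ₀^5*s*Q - 2*c^4*σ₀^6*s) * hs
    + (-2*s*Q^2 - 2*s*Q^4 - 4*A*s*Q^2 - 4*σ₀^2*s + 4*σ₀^2*s^3 + 2*σ₀^2*s^3*Q^2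
      + 4*σ₀^2*A*s - 4*σ₀^2*A*s^3 + 2*σ₀^4*s - 2*σ₀^4*s^5 - 4*c*σ₀*s*Q - 4*c*σ₀*s*Q^3
      - 8*c*σ₀*A*s*Q + 4*c*σ₀^3*s^3*Q + 2*c^2*σ₀^2*s + 2*c^2*σ₀^2*s*Q^2
      - 8*c^2*σ₀^2*A*s - 2*c^2*σ₀^4*s^3 + 8*c^3*σ₀^3*s*Q + 2*c^4*σ₀^4*s) * hQ


set_option maxHeartbeats 1000000 in
private lemma aux1 (σ₀ σ₁ ε η : ℝ) (hQ : Real.sqrt (1 - σ₀ ^ 2 * Real.sin η ^ 2) ≠ 0)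
    (hD : (σ₀ * Real.cos η + Real.sqrt (1 - σ₀ ^ 2 * Real.sin η ^ 2)) ^ 2 + ε * σ₁ ^ 2 ≠ 0) :
    (2 * Real.sqrt (1 - σ₀ ^ 2 * Real.sin η ^ 2) * Real.cos η +
          2 * σ₀ * Real.sin η ^ 2 *
            (((σ₀ * Real.cos η + Real.sqrt (1 - σ₀ ^ 2 * Real.sin η ^ 2)) ^ 2 - ε * σ₁ ^ 2) /
             ((σ₀ * Real.cos η + Real.sqrt (1 - σ₀ ^ 2 * Real.sin η ^ 2)) ^ 2 + ε * σ₁ ^ 2))) *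
          ((2 * σ₁ * (σ₀ * Real.cos η + Real.sqrt (1 - σ₀ ^ 2 * Real.sin η ^ 2)) /
            ((σ₀ * Real.cos η + Real.sqrt (1 - σ₀ ^ 2 * Real.sin η ^ 2)) ^ 2 + ε * σ₁ ^ 2)) ^ 2
            * Real.sin η / Real.sqrt (1 - σ₀ ^ 2 * Real.sin η ^ 2)) =
    (2:ℕ) * (2 * σ₁ * (σ₀ * Real.cos η + Real.sqrt (1 - σ₀ ^ 2 * Real.sin η ^ 2)) /
            ((σ₀ * Real.cos η + Real.sqrt (1 - σ₀ ^ 2 * Real.sin η ^ 2)) ^ 2 + ε * σ₁ ^ 2)) ^ (2-1) *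
        ((2 * σ₁ * (-(σ₀ * Real.sin η * (σ₀ * Real.cos η + Real.sqrt (1 - σ₀ ^ 2 * Real.sin η ^ 2))) / Real.sqrt (1 - σ₀ ^ 2 * Real.sin η ^ 2)) *
              ((σ₀ * Real.cos η + Real.sqrt (1 - σ₀ ^ 2 * Real.sin η ^ 2)) ^ 2 + ε * σ₁ ^ 2) -
            2 * σ₁ * (σ₀ * Real.cos η + Real.sqrt (1 - σ₀ ^ 2 * Real.sin η ^ 2)) *
              ((2:ℕ) * (σ₀ * Real.cos η + Real.sqrt (1 - σ₀ ^ 2 * Real.sin η ^ 2)) ^ (2-1) *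
                (-(σ₀ * Real.sin η * (σ₀ * Real.cos η + Real.sqrt (1 - σ₀ ^ 2 * Real.sin η ^ 2))) / Real.sqrt (1 - σ₀ ^ 2 * Real.sin η ^ 2)))) /
          ((σ₀ * Real.cos η + Real.sqrt (1 - σ₀ ^ 2 * Real.sin η ^ 2)) ^ 2 + ε * σ₁ ^ 2) ^ 2) * Real.sin η ^ 2 +
      (2 * σ₁ * (σ₀ * Real.cos η + Real.sqrt (1 - σ₀ ^ 2 * Real.sin η ^ 2)) /
            ((σ₀ * Real.cos η + Real.sqrt (1 - σ₀ ^ 2 * Real.sin η ^ 2)) ^ 2 + ε * σ₁ ^ 2)) ^ 2 *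
        ((2:ℕ) * Real.sin η ^ (2-1) * Real.cos η) := by
  generalize Real.sqrt (1 - σ₀ ^ 2 * Real.sin _ ^ 2) = Q at *
  generalize hPdef : σ₀ * Real.cos _ + Q = P at *
  push_cast
  field_simp
  subst hPdef
  ring

set_option maxHeartbeats 1000000 in
private lemma aux2 (σ₀ σ₁ ε θ : ℝ) (hQ : Real.sqrt (1 - σ₀ ^ 2 * Real.sin θ ^ 2) ≠ 0)
    (hD : (σ₀ * Real.cos θ + Real.sqrt (1 - σ₀ ^ 2 * Real.sin θ ^ 2)) ^ 2 + ε * σ₁ ^ 2 ≠ 0) :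
    ((-2*σ₀^2*Real.sin θ*Real.cos θ^2*((σ₀*Real.cos θ+Real.sqrt (1 - σ₀ ^ 2 * Real.sin θ ^ 2))^2+ε*σ₁^2)^2
        - 2*Real.sqrt (1 - σ₀ ^ 2 * Real.sin θ ^ 2)^2*Real.sin θ*((σ₀*Real.cos θ+Real.sqrt (1 - σ₀ ^ 2 * Real.sin θ ^ 2))^2+ε*σ₁^2)^2
        + 4*σ₀*Real.sin θ*Real.cos θ*((σ₀*Real.cos θ+Real.sqrt (1 - σ₀ ^ 2 * Real.sin θ ^ 2))^2-ε*σ₁^2)*Real.sqrt (1 - σ₀ ^ 2 * Real.sin θ ^ 2)*((σ₀*Real.cos θ+Real.sqrt (1 - σ₀ ^ 2 * Real.sin θ ^ 2))^2+ε*σ₁^2)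
        - 8*σ₀^2*(ε*σ₁^2)*Real.sin θ^3*(σ₀*Real.cos θ+Real.sqrt (1 - σ₀ ^ 2 * Real.sin θ ^ 2))^2) /
        (Real.sqrt (1 - σ₀ ^ 2 * Real.sin θ ^ 2) *
          ((σ₀*Real.cos θ+Real.sqrt (1 - σ₀ ^ 2 * Real.sin θ ^ 2))^2+ε*σ₁^2)^2)) =
    2 * (-(σ₀ ^ 2 * ((2:ℕ) * Real.sin θ ^ (2 - 1) * Real.cos θ)) / (2 * Real.sqrt (1 - σ₀ ^ 2 * Real.sin θ ^ 2))) * Real.cos θ +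
        2 * Real.sqrt (1 - σ₀ ^ 2 * Real.sin θ ^ 2) * (-Real.sin θ) +
      (2 * σ₀ * ((2:ℕ) * Real.sin θ ^ (2 - 1) * Real.cos θ) *
          (((σ₀ * Real.cos θ + Real.sqrt (1 - σ₀ ^ 2 * Real.sin θ ^ 2)) ^ 2 - ε * σ₁ ^ 2) /
           ((σ₀ * Real.cos θ + Real.sqrt (1 - σ₀ ^ 2 * Real.sin θ ^ 2)) ^ 2 + ε * σ₁ ^ 2)) +
        2 * σ₀ * Real.sin θ ^ 2 *
          (((2:ℕ) * (σ₀ * Real.cos θ + Real.sqrt (1 - σ₀ ^ 2 * Real.sin θ ^ 2)) ^ (2 - 1) *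
              (-(σ₀ * Real.sin θ * (σ₀ * Real.cos θ + Real.sqrt (1 - σ₀ ^ 2 * Real.sin θ ^ 2))) / Real.sqrt (1 - σ₀ ^ 2 * Real.sin θ ^ 2)) *
              ((σ₀ * Real.cos θ + Real.sqrt (1 - σ₀ ^ 2 * Real.sin θ ^ 2)) ^ 2 + ε * σ₁ ^ 2) -
            ((σ₀ * Real.cos θ + Real.sqrt (1 - σ₀ ^ 2 * Real.sin θ ^ 2)) ^ 2 - ε * σ₁ ^ 2) *
              ((2:ℕ) * (σ₀ * Real.cos θ + Real.sqrt (1 - σ₀ ^ 2 * Real.sin θ ^ 2)) ^ (2 - 1) *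
                (-(σ₀ * Real.sin θ * (σ₀ * Real.cos θ + Real.sqrt (1 - σ₀ ^ 2 * Real.sin θ ^ 2))) / Real.sqrt (1 - σ₀ ^ 2 * Real.sin θ ^ 2)))) /
            ((σ₀ * Real.cos θ + Real.sqrt (1 - σ₀ ^ 2 * Real.sin θ ^ 2)) ^ 2 + ε * σ₁ ^ 2) ^ 2)) := by
  generalize Real.sqrt (1 - σ₀ ^ 2 * Real.sin _ ^ 2) = Q at *
  generalize hPdef : σ₀ * Real.cos _ + Q = P at *
  push_cast
  field_simp
  subst hPdef
  ring

set_option maxHeartbeats 2000000 in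
theorem scalar_curvature_constant (ε σ₀ σ₁ : ℝ) (hε : ε ∈ ({-1, 0, 1} : Set ℝ))
    (hσ₁ : σ₁ ≠ 0)
    (P S E G : ℝ → ℝ)
    (hP : P = fun θ => σ₀ * Real.cos θ + Real.sqrt (1 - σ₀ ^ 2 * Real.sin θ ^ 2))
    (hS : S = fun θ => 2 * σ₁ * P θ / (P θ ^ 2 + ε * σ₁ ^ 2))
    (hE : E = fun θ => (S θ) ^ 2 / (1 - σ₀ ^ 2 * Real.sin θ ^ 2))
    (hG : G = fun θ => (S θ) ^ 2 * Real.sin θ ^ 2)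
    (hpos : ∀ θ ∈ Set.Ioo (0 : ℝ) Real.pi,
      0 < S θ ∧ 0 < 1 - σ₀ ^ 2 * Real.sin θ ^ 2) :
    ∀ θ ∈ Set.Ioo (0 : ℝ) Real.pi,
      -(1 / Real.sqrt (E θ * G θ)) *
          deriv (fun θ' => deriv G θ' / Real.sqrt (E θ' * G θ')) θ =
        ((1 + σ₀) ^ 2 + ε * σ₁ ^ 2) * ((1 - σ₀) ^ 2 + ε * σ₁ ^ 2) /
          (2 * σ₁ ^ 2) := by
  -- abbreviation-free pointwise facts
  have hfacts : ∀ η ∈ Set.Ioo (0 : ℝ) Real.pi,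
      0 < Real.sin η ∧ 0 < 1 - σ₀ ^ 2 * Real.sin η ^ 2 ∧
      (σ₀ * Real.cos η + Real.sqrt (1 - σ₀ ^ 2 * Real.sin η ^ 2)) ≠ 0 ∧
      ((σ₀ * Real.cos η + Real.sqrt (1 - σ₀ ^ 2 * Real.sin η ^ 2)) ^ 2 + ε * σ₁ ^ 2) ≠ 0 := by
    intro η hη
    obtain ⟨hS0, hq0⟩ := hpos η hη
    have hsin : 0 < Real.sin η := Real.sin_pos_of_pos_of_lt_pi hη.1 hη.2
    rw [hS, hP] at hS0
    simp only at hS0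
    refine ⟨hsin, hq0, ?_, ?_⟩
    · intro h; rw [h] at hS0; simp at hS0
    · intro h; rw [h] at hS0; simp at hS0
  -- derivative of the P function
  have hPd : ∀ η ∈ Set.Ioo (0 : ℝ) Real.pi,
      HasDerivAt (fun x => σ₀ * Real.cos x + Real.sqrt (1 - σ₀ ^ 2 * Real.sin x ^ 2))
        (-(σ₀ * Real.sin η * (σ₀ * Real.cos η + Real.sqrt (1 - σ₀ ^ 2 * Real.sin η ^ 2)))
          / Real.sqrt (1 - σ₀ ^ 2 * Real.sin η ^ 2)) η := by
    intro η hη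
    obtain ⟨-, hq0, -, -⟩ := hfacts η hη
    have hQpos : 0 < Real.sqrt (1 - σ₀ ^ 2 * Real.sin η ^ 2) := Real.sqrt_pos.2 hq0
    have hQ2 : Real.sqrt (1 - σ₀ ^ 2 * Real.sin η ^ 2) ^ 2 = 1 - σ₀ ^ 2 * Real.sin η ^ 2 :=
      Real.sq_sqrt hq0.le
    have h1 : HasDerivAt (fun x => 1 - σ₀ ^ 2 * Real.sin x ^ 2)
        (-(σ₀ ^ 2 * ((2 : ℕ) * Real.sin η ^ (2 - 1) * Real.cos η))) η :=
      (((Real.hasDerivAt_sin η).pow 2).const_mul (σ₀ ^ 2)).const_sub 1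
    have h2 := ((Real.hasDerivAt_cos η).const_mul σ₀).add (h1.sqrt hq0.ne')
    refine h2.congr_deriv ?_
    field_simp
    ring
  intro θ hθ
  obtain ⟨hs0, hq0, hp0, hD0⟩ := hfacts θ hθ
  have hQpos : 0 < Real.sqrt (1 - σ₀ ^ 2 * Real.sin θ ^ 2) := Real.sqrt_pos.2 hq0
  have hQ2 : Real.sqrt (1 - σ₀ ^ 2 * Real.sin θ ^ 2) ^ 2 = 1 - σ₀ ^ 2 * Real.sin θ ^ 2 :=
    Real.sq_sqrt hq0.le
  -- closed form for sqrt (E η * G η)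
  have hsqrt : ∀ η ∈ Set.Ioo (0 : ℝ) Real.pi,
      Real.sqrt (E η * G η) =
        S η ^ 2 * Real.sin η / Real.sqrt (1 - σ₀ ^ 2 * Real.sin η ^ 2) := by
    intro η hη
    obtain ⟨hs0', hq0', -, -⟩ := hfacts η hη
    have hQ2' : Real.sqrt (1 - σ₀ ^ 2 * Real.sin η ^ 2) ^ 2 = 1 - σ₀ ^ 2 * Real.sin η ^ 2 :=
      Real.sq_sqrt hq0'.le
    have hEG : E η * G η =
        (S η ^ 2 * Real.sin η / Real.sqrt (1 - σ₀ ^ 2 * Real.sin η ^ 2)) ^ 2 := by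
      simp only [hE, hG]
      rw [div_pow, hQ2']
      ring
    rw [hEG, Real.sqrt_sq (div_nonneg (mul_nonneg (sq_nonneg _) hs0'.le) (Real.sqrt_nonneg _))]
  -- closed form for the inner function on Ioo 0 π
  have step3 : ∀ η ∈ Set.Ioo (0 : ℝ) Real.pi,
      deriv G η / Real.sqrt (E η * G η) =
        2 * Real.sqrt (1 - σ₀ ^ 2 * Real.sin η ^ 2) * Real.cos η +
          2 * σ₀ * Real.sin η ^ 2 *
            (((σ₀ * Real.cos η + Real.sqrt (1 - σ₀ ^ 2 * Real.sin η ^ 2)) ^ 2 - ε * σ₁ ^ 2) /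
             ((σ₀ * Real.cos η + Real.sqrt (1 - σ₀ ^ 2 * Real.sin η ^ 2)) ^ 2 + ε * σ₁ ^ 2)) := by
    intro η hη
    obtain ⟨hs0', hq0', hp0', hD0'⟩ := hfacts η hη
    have hQpos' : 0 < Real.sqrt (1 - σ₀ ^ 2 * Real.sin η ^ 2) := Real.sqrt_pos.2 hq0'
    have hPd' := hPd η hη
    have hGd : HasDerivAt
        (fun x => (2 * σ₁ * (σ₀ * Real.cos x + Real.sqrt (1 - σ₀ ^ 2 * Real.sin x ^ 2)) /
            ((σ₀ * Real.cos x + Real.sqrt (1 - σ₀ ^ 2 * Real.sin x ^ 2)) ^ 2 + ε * σ₁ ^ 2)) ^ 2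
            * Real.sin x ^ 2)
        ((2 * Real.sqrt (1 - σ₀ ^ 2 * Real.sin η ^ 2) * Real.cos η +
          2 * σ₀ * Real.sin η ^ 2 *
            (((σ₀ * Real.cos η + Real.sqrt (1 - σ₀ ^ 2 * Real.sin η ^ 2)) ^ 2 - ε * σ₁ ^ 2) /
             ((σ₀ * Real.cos η + Real.sqrt (1 - σ₀ ^ 2 * Real.sin η ^ 2)) ^ 2 + ε * σ₁ ^ 2))) *
          ((2 * σ₁ * (σ₀ * Real.cos η + Real.sqrt (1 - σ₀ ^ 2 * Real.sin η ^ 2)) /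
            ((σ₀ * Real.cos η + Real.sqrt (1 - σ₀ ^ 2 * Real.sin η ^ 2)) ^ 2 + ε * σ₁ ^ 2)) ^ 2
            * Real.sin η / Real.sqrt (1 - σ₀ ^ 2 * Real.sin η ^ 2))) η := by
      have h := (((hPd'.const_mul (2 * σ₁)).div ((hPd'.pow 2).add_const (ε * σ₁ ^ 2))
        hD0').pow 2).mul ((Real.hasDerivAt_sin η).pow 2)
      exact h.congr_deriv (aux1 σ₀ σ₁ ε η hQpos'.ne' hD0').symm
    rw [hsqrt η hη]
    simp only [hG, hS, hP]
    rw [hGd.deriv, mul_div_assoc, div_self, mul_one]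
    apply div_ne_zero
    · exact mul_ne_zero (pow_ne_zero _ (div_ne_zero
        (mul_ne_zero (mul_ne_zero two_ne_zero hσ₁) hp0') hD0')) hs0'.ne'
    · exact hQpos'.ne'
  -- eventual equality near θ
  have hev : (fun η => deriv G η / Real.sqrt (E η * G η)) =ᶠ[nhds θ]
      (fun η => 2 * Real.sqrt (1 - σ₀ ^ 2 * Real.sin η ^ 2) * Real.cos η +
          2 * σ₀ * Real.sin η ^ 2 *
            (((σ₀ * Real.cos η + Real.sqrt (1 - σ₀ ^ 2 * Real.sin η ^ 2)) ^ 2 - ε * σ₁ ^ 2) /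
             ((σ₀ * Real.cos η + Real.sqrt (1 - σ₀ ^ 2 * Real.sin η ^ 2)) ^ 2 + ε * σ₁ ^ 2))) := by
    filter_upwards [isOpen_Ioo.mem_nhds hθ] with η hη using step3 η hη
  -- derivative of the closed form at θ
  have hHf : HasDerivAt
      (fun η => 2 * Real.sqrt (1 - σ₀ ^ 2 * Real.sin η ^ 2) * Real.cos η +
          2 * σ₀ * Real.sin η ^ 2 *
            (((σ₀ * Real.cos η + Real.sqrt (1 - σ₀ ^ 2 * Real.sin η ^ 2)) ^ 2 - ε * σ₁ ^ 2) /
             ((σ₀ * Real.cos η + Real.sqrt (1 - σ₀ ^ 2 * Real.sin η ^ 2)) ^ 2 + ε * σ₁ ^ 2)))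
      ((-2*σ₀^2*Real.sin θ*Real.cos θ^2*((σ₀*Real.cos θ+Real.sqrt (1 - σ₀ ^ 2 * Real.sin θ ^ 2))^2+ε*σ₁^2)^2
        - 2*Real.sqrt (1 - σ₀ ^ 2 * Real.sin θ ^ 2)^2*Real.sin θ*((σ₀*Real.cos θ+Real.sqrt (1 - σ₀ ^ 2 * Real.sin θ ^ 2))^2+ε*σ₁^2)^2
        + 4*σ₀*Real.sin θ*Real.cos θ*((σ₀*Real.cos θ+Real.sqrt (1 - σ₀ ^ 2 * Real.sin θ ^ 2))^2-ε*σ₁^2)*Real.sqrt (1 - σ₀ ^ 2 * Real.sin θ ^ 2)*((σ₀*Real.cos θ+Real.sqrt (1 - σ₀ ^ 2 * Real.sin θ ^ 2))^2+ε*σ₁^2)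
        - 8*σ₀^2*(ε*σ₁^2)*Real.sin θ^3*(σ₀*Real.cos θ+Real.sqrt (1 - σ₀ ^ 2 * Real.sin θ ^ 2))^2) /
        (Real.sqrt (1 - σ₀ ^ 2 * Real.sin θ ^ 2) *
          ((σ₀*Real.cos θ+Real.sqrt (1 - σ₀ ^ 2 * Real.sin θ ^ 2))^2+ε*σ₁^2)^2)) θ := by
    have h1 : HasDerivAt (fun x => 1 - σ₀ ^ 2 * Real.sin x ^ 2)
        (-(σ₀ ^ 2 * ((2 : ℕ) * Real.sin θ ^ (2 - 1) * Real.cos θ))) θ :=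
      (((Real.hasDerivAt_sin θ).pow 2).const_mul (σ₀ ^ 2)).const_sub 1
    have hPd' := hPd θ hθ
    have part1 := ((h1.sqrt hq0.ne').const_mul 2).mul (Real.hasDerivAt_cos θ)
    have part2 := (((Real.hasDerivAt_sin θ).pow 2).const_mul (2 * σ₀)).mul
      (((hPd'.pow 2).sub_const (ε * σ₁ ^ 2)).div ((hPd'.pow 2).add_const (ε * σ₁ ^ 2)) hD0)
    have h := part1.add part2
    exact h.congr_deriv (aux2 σ₀ σ₁ ε θ hQpos.ne' hD0).symm
  have hderiv2 : deriv (fun θ' => deriv G θ' / Real.sqrt (E θ' * G θ')) θ = _ :=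
    hev.deriv_eq.trans hHf.deriv
  rw [hderiv2, hsqrt θ hθ,
    key_poly σ₀ (ε * σ₁ ^ 2) (Real.cos θ) (Real.sin θ)
      (Real.sqrt (1 - σ₀ ^ 2 * Real.sin θ ^ 2)) (Real.sin_sq θ) hQ2,
    hS, hP]
  simp only
  field_simp [hQpos.ne', hD0, hp0, hs0.ne', hσ₁]
  rw [mul_assoc, mul_div_cancel_left₀ _ (by rwa [mul_comm ε] at hD0)]
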